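/- Let (X, I, q, g) be a deterministic commutative MDP such that for every x ∈ X the MDP starting at x has a uniform value in pure strategies v*(x). Then for every x₁ ∈ X there exists a partially 0-optimal pure strategy: a pure strategy a ∈ I^ℕ such that limsup_{n→∞} γ_n(x₁, a) = v*(x₁). -/

import Mathlib

open Filter Topology

noncomputable section

/-- The play induced by an initial state `x₁` and a pure strategy `a` in a deterministic MDP:
`x₀ = x₁` and `x_{t+1} = q (x_t) (a t)`. -/
def play {X I : Type*} (q : X → I → X) (x₁ : X) (a : ℕ → I) : ℕ → X
  | 0 => x₁
  | t + 1 => q (play q x₁ a t) (a t)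

/-- The `n`-stage average payoff `γ_n(x₁, a)`. -/
def payoff {X I : Type*} (q : X → I → X) (g : X → I → ℝ) (x₁ : X) (a : ℕ → I) (n : ℕ) : ℝ :=
  (1 / (n : ℝ)) * ∑ t ∈ Finset.range n, g (play q x₁ a t) (a t)

/-- The `n`-stage value `v_n(x₁)`. -/
def nValue {X I : Type*} (q : X → I → X) (g : X → I → ℝ) (x₁ : X) (n : ℕ) : ℝ :=
  ⨆ a : ℕ → I, payoff q g x₁ a n

/-- The MDP starting at `x₁` has a uniform value `v` in pure strategies. -/
def HasUniformValuePure {X I : Type*} (q : X → I → X) (g : X → I → ℝ) (x₁ : X) (v : ℝ) : Prop :=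
  (∀ ε > (0 : ℝ), ∃ a : ℕ → I, v - ε ≤ liminf (fun n => payoff q g x₁ a n) atTop) ∧
    limsup (fun n => nValue q g x₁ n) atTop ≤ v

set_option linter.unusedSectionVars false
set_option linter.unusedVariables false

namespace PZO

variable {X I : Type*} [Fintype I] [Nonempty I]

/-- The raw (unnormalized) payoff sum. -/
def psum (q : X → I → X) (g : X → I → ℝ) (x : X) (a : ℕ → I) (n : ℕ) : ℝ :=
  ∑ t ∈ Finset.range n, g (play q x a t) (a t)

lemma payoff_eq_psum (q : X → I → X) (g : X → I → ℝ) (x : X) (a : ℕ → I) (n : ℕ) :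
    payoff q g x a n = (1 / (n : ℝ)) * psum q g x a n := rfl

lemma play_zero (q : X → I → X) (x : X) (a : ℕ → I) : play q x a 0 = x := rfl

lemma play_succ (q : X → I → X) (x : X) (a : ℕ → I) (n : ℕ) :
    play q x a (n + 1) = q (play q x a n) (a n) := rfl

lemma play_congr {q : X → I → X} {x : X} {a b : ℕ → I} :
    ∀ {n : ℕ}, (∀ t < n, a t = b t) → play q x a n = play q x b n
  | 0, _ => rfl
  | n + 1, h => by
      rw [play_succ, play_succ, play_congr (fun t ht => h t (ht.trans (Nat.lt_succ_self n))),
        h n (Nat.lt_succ_self n)]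

lemma psum_congr {q : X → I → X} {g : X → I → ℝ} {x : X} {a b : ℕ → I} {n : ℕ}
    (h : ∀ t < n, a t = b t) : psum q g x a n = psum q g x b n := by
  unfold psum
  refine Finset.sum_congr rfl fun t ht => ?_
  have ht' := Finset.mem_range.mp ht
  rw [play_congr (fun s hs => h s (hs.trans ht')), h t ht']

lemma play_add (q : X → I → X) (x : X) (a : ℕ → I) (m : ℕ) :
    ∀ n, play q x a (m + n) = play q (play q x a m) (fun t => a (m + t)) n
  | 0 => rfl
  | n + 1 => by
      rw [← Nat.add_assoc, play_succ, play_succ, play_add q x a m n]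

lemma psum_add (q : X → I → X) (g : X → I → ℝ) (x : X) (a : ℕ → I) (m : ℕ) :
    ∀ n, psum q g x a (m + n) = psum q g x a m + psum q g (play q x a m) (fun t => a (m + t)) n
  | 0 => by simp [psum]
  | n + 1 => by
      rw [← Nat.add_assoc]
      unfold psum
      rw [Finset.sum_range_succ, Finset.sum_range_succ]
      have := psum_add q g x a m n
      unfold psum at this
      rw [this, play_add q x a m n]
      ring

section bounds

variable {q : X → I → X} {g : X → I → ℝ}

lemma psum_nonneg (hg : ∀ x i, g x i ∈ Set.Icc (0 : ℝ) 1) (x : X) (a : ℕ → I) (n : ℕ) :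
    0 ≤ psum q g x a n :=
  Finset.sum_nonneg fun t _ => (hg _ _).1

lemma psum_le (hg : ∀ x i, g x i ∈ Set.Icc (0 : ℝ) 1) (x : X) (a : ℕ → I) (n : ℕ) :
    psum q g x a n ≤ n := by
  calc psum q g x a n ≤ ∑ t ∈ Finset.range n, (1 : ℝ) :=
        Finset.sum_le_sum fun t _ => (hg _ _).2
    _ = n := by simp

lemma payoff_nonneg (hg : ∀ x i, g x i ∈ Set.Icc (0 : ℝ) 1) (x : X) (a : ℕ → I) (n : ℕ) :
    0 ≤ payoff q g x a n := by
  rw [payoff_eq_psum]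
  have := psum_nonneg (q := q) hg x a n
  positivity

lemma payoff_le_one (hg : ∀ x i, g x i ∈ Set.Icc (0 : ℝ) 1) (x : X) (a : ℕ → I) (n : ℕ) :
    payoff q g x a n ≤ 1 := by
  rw [payoff_eq_psum]
  rcases Nat.eq_zero_or_pos n with rfl | hn
  · simp
  · have hn' : (0 : ℝ) < n := by exact_mod_cast hn
    rw [one_div, inv_mul_le_iff₀ hn', mul_one]
    exact psum_le hg x a n

end bounds

section shift

variable {q : X → I → X} {g : X → I → ℝ}

/-- Quantitative comparison of shifted payoffs, forward direction. -/
lemma payoff_shift_le (hg : ∀ x i, g x i ∈ Set.Icc (0 : ℝ) 1) (x : X) (a : ℕ → I) (m n : ℕ) :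
    payoff q g x a (m + n) ≤
      payoff q g (play q x a m) (fun t => a (m + t)) n + (m : ℝ) / ((m : ℝ) + n) := by
  set y := play q x a m
  set a' : ℕ → I := fun t => a (m + t)
  rcases Nat.eq_zero_or_pos n with rfl | hn
  · rcases Nat.eq_zero_or_pos m with rfl | hm
    · simp [payoff]
    · have hm' : (0 : ℝ) < m := by exact_mod_cast hm
      have h1 : payoff q g x a (m + 0) ≤ 1 := payoff_le_one hg _ _ _
      have h0 : 0 ≤ payoff q g y a' 0 := payoff_nonneg hg _ _ _
      have h2 : (m : ℝ) / ((m : ℝ) + (0: ℕ)) = 1 := by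
        rw [Nat.cast_zero, add_zero, div_self hm'.ne']
      rw [h2]
      linarith
  · have hn' : (0 : ℝ) < n := by exact_mod_cast hn
    have hmn' : (0 : ℝ) < (m : ℝ) + n := by positivity
    have hcast : ((m + n : ℕ) : ℝ) = (m : ℝ) + n := by push_cast; ring
    rw [payoff_eq_psum, payoff_eq_psum, psum_add q g x a m n, hcast]
    have hSm : psum q g x a m ≤ m := psum_le hg _ _ _
    have hS'0 : 0 ≤ psum q g y a' n := psum_nonneg hg _ _ _
    have hS'n : psum q g y a' n ≤ n := psum_le hg _ _ _
    rw [one_div, one_div, inv_mul_eq_div, inv_mul_eq_div]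
    rw [div_add_div _ _ hn'.ne' hmn'.ne', div_le_div_iff₀ hmn' (by positivity)]
    have hSm0 : 0 ≤ psum q g x a m := psum_nonneg (q := q) hg x a m
    have h4 : 0 ≤ ((m : ℝ) + n) * (psum q g y a' n * m + ((m : ℝ) * n - psum q g x a m * n)) := by
      have hm0 : (0 : ℝ) ≤ m := by positivity
      have h5 : psum q g x a m * n ≤ (m : ℝ) * n := mul_le_mul_of_nonneg_right hSm hn'.le
      have h6 : 0 ≤ psum q g y a' n * m := mul_nonneg hS'0 hm0
      nlinarith
    nlinarith [h4]

/-- Quantitative comparison of shifted payoffs, reverse direction. -/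
lemma payoff_shift_ge (hg : ∀ x i, g x i ∈ Set.Icc (0 : ℝ) 1) (x : X) (a : ℕ → I) (m n : ℕ) :
    payoff q g (play q x a m) (fun t => a (m + t)) n - (m : ℝ) / ((m : ℝ) + n) ≤
      payoff q g x a (m + n) := by
  set y := play q x a m
  set a' : ℕ → I := fun t => a (m + t)
  rcases Nat.eq_zero_or_pos n with rfl | hn
  · have h0 : payoff q g y a' 0 = 0 := by simp [payoff]
    rw [h0]
    have h1 : 0 ≤ payoff q g x a (m + 0) := payoff_nonneg hg _ _ _
    have h2 : 0 ≤ (m : ℝ) / ((m : ℝ) + 0) := by positivity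
    linarith
  · have hn' : (0 : ℝ) < n := by exact_mod_cast hn
    have hmn' : (0 : ℝ) < (m : ℝ) + n := by positivity
    have hcast : ((m + n : ℕ) : ℝ) = (m : ℝ) + n := by push_cast; ring
    rw [payoff_eq_psum, payoff_eq_psum, psum_add q g x a m n, hcast]
    have hSm : 0 ≤ psum q g x a m := psum_nonneg hg _ _ _
    have hS'0 : 0 ≤ psum q g y a' n := psum_nonneg hg _ _ _
    have hS'n : psum q g y a' n ≤ n := psum_le hg _ _ _
    rw [one_div, one_div, inv_mul_eq_div, inv_mul_eq_div]
    rw [sub_le_iff_le_add, div_add_div _ _ hmn'.ne' hmn'.ne', div_le_div_iff₀ hn' (by positivity)]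
    have h3 : 0 ≤ ((m : ℝ) + n) * (psum q g x a m * n + ((n : ℝ) * m - psum q g y a' n * m)) := by
      have hm0 : (0 : ℝ) ≤ m := by positivity
      have : psum q g y a' n * m ≤ (n : ℝ) * m := mul_le_mul_of_nonneg_right hS'n hm0
      have : 0 ≤ psum q g x a m * n := mul_nonneg hSm hn'.le
      nlinarith
    nlinarith [h3]

lemma isBoundedUnder_le_payoff (hg : ∀ x i, g x i ∈ Set.Icc (0 : ℝ) 1) (x : X) (a : ℕ → I) :
    IsBoundedUnder (· ≤ ·) atTop (fun n => payoff q g x a n) :=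
  isBoundedUnder_of ⟨1, fun n => payoff_le_one hg x a n⟩

lemma isBoundedUnder_ge_payoff (hg : ∀ x i, g x i ∈ Set.Icc (0 : ℝ) 1) (x : X) (a : ℕ → I) :
    IsBoundedUnder (· ≥ ·) atTop (fun n => payoff q g x a n) :=
  isBoundedUnder_of ⟨0, fun n => payoff_nonneg hg x a n⟩

/-- Generic: if `u ≤ w + e` eventually with `e → 0`, then `liminf u ≤ liminf w`. -/
lemma liminf_le_liminf_of_le_add {u w e : ℕ → ℝ}
    (hbu : IsBoundedUnder (· ≥ ·) atTop u) (hbw : IsBoundedUnder (· ≤ ·) atTop w)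
    (he : Tendsto e atTop (𝓝 0)) (hle : ∀ᶠ n in atTop, u n ≤ w n + e n) :
    liminf u atTop ≤ liminf w atTop := by
  by_contra hcon
  push_neg at hcon
  obtain ⟨c, hc1, hc2⟩ := exists_between hcon
  obtain ⟨c', hc1', hc2'⟩ := exists_between hc2
  have h1 : ∀ᶠ n in atTop, c' < u n := eventually_lt_of_lt_liminf hc2' hbu
  have h2 : ∀ᶠ n in atTop, e n < c' - c := he.eventually (gt_mem_nhds (by linarith))
  have h3 : ∀ᶠ n in atTop, c ≤ w n := by
    filter_upwards [h1, h2, hle] with n hn1 hn2 hn3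
    linarith
  have : c ≤ liminf w atTop := le_liminf_of_le hbw.isCoboundedUnder_ge h3
  linarith

lemma tendsto_mdiv (m : ℕ) : Tendsto (fun n : ℕ => (m : ℝ) / ((m : ℝ) + n)) atTop (𝓝 0) := by
  apply Tendsto.div_atTop tendsto_const_nhds
  exact tendsto_atTop_add_const_left atTop _ tendsto_natCast_atTop_atTop

/-- The liminf of average payoffs is invariant under dropping a finite prefix. -/
lemma liminf_shift_eq (hg : ∀ x i, g x i ∈ Set.Icc (0 : ℝ) 1) (x : X) (a : ℕ → I) (m : ℕ) :
    liminf (fun n => payoff q g (play q x a m) (fun t => a (m + t)) n) atTop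
      = liminf (fun n => payoff q g x a n) atTop := by
  have hnat := liminf_nat_add (fun n => payoff q g x a n) m
  rw [← hnat]
  set y := play q x a m
  set a' : ℕ → I := fun t => a (m + t)
  apply le_antisymm
  · refine liminf_le_liminf_of_le_add (isBoundedUnder_ge_payoff hg _ _)
      (isBoundedUnder_of ⟨1, fun n => payoff_le_one hg x a (n + m)⟩)
      (tendsto_mdiv m) (Eventually.of_forall fun n => ?_)
    have := payoff_shift_ge (q := q) hg x a m n
    have hc : m + n = n + m := Nat.add_comm m n
    rw [hc] at this
    linarith
  · refine liminf_le_liminf_of_le_add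
      (isBoundedUnder_of ⟨0, fun n => payoff_nonneg hg x a (n + m)⟩)
      (isBoundedUnder_le_payoff hg _ _)
      (tendsto_mdiv m) (Eventually.of_forall fun n => ?_)
    have := payoff_shift_le (q := q) hg x a m n
    have hc : m + n = n + m := Nat.add_comm m n
    rw [hc] at this
    linarith

end shift

section value

variable {q : X → I → X} {g : X → I → ℝ} {v : X → ℝ}

lemma payoff_le_nValue (hg : ∀ x i, g x i ∈ Set.Icc (0 : ℝ) 1) (x : X) (a : ℕ → I) (n : ℕ) :
    payoff q g x a n ≤ nValue q g x n := by
  have hb : BddAbove (Set.range fun b : ℕ → I => payoff q g x b n) := by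
    refine ⟨1, ?_⟩
    rintro r ⟨b, rfl⟩
    exact payoff_le_one hg x b n
  exact le_ciSup hb a

lemma nValue_le_one (hg : ∀ x i, g x i ∈ Set.Icc (0 : ℝ) 1) (x : X) (n : ℕ) :
    nValue q g x n ≤ 1 :=
  ciSup_le fun a => payoff_le_one hg x a n

lemma nValue_nonneg (hg : ∀ x i, g x i ∈ Set.Icc (0 : ℝ) 1) (x : X) (n : ℕ) :
    0 ≤ nValue q g x n :=
  le_trans (payoff_nonneg hg x (Classical.arbitrary _) n)
    (payoff_le_nValue hg x (Classical.arbitrary _) n)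

lemma limsup_payoff_le (hg : ∀ x i, g x i ∈ Set.Icc (0 : ℝ) 1)
    (hv : ∀ x, HasUniformValuePure q g x (v x)) (x : X) (a : ℕ → I) :
    limsup (fun n => payoff q g x a n) atTop ≤ v x := by
  refine le_trans (limsup_le_limsup (Eventually.of_forall fun n => payoff_le_nValue hg x a n)
    ?_ ?_) (hv x).2
  · exact (isBoundedUnder_ge_payoff hg x a).isCoboundedUnder_le
  · exact isBoundedUnder_of ⟨1, fun n => nValue_le_one hg x n⟩

lemma liminf_payoff_le (hg : ∀ x i, g x i ∈ Set.Icc (0 : ℝ) 1)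
    (hv : ∀ x, HasUniformValuePure q g x (v x)) (x : X) (a : ℕ → I) :
    liminf (fun n => payoff q g x a n) atTop ≤ v x :=
  le_trans (liminf_le_limsup (isBoundedUnder_le_payoff hg x a) (isBoundedUnder_ge_payoff hg x a))
    (limsup_payoff_le hg hv x a)

lemma v_le_one (hg : ∀ x i, g x i ∈ Set.Icc (0 : ℝ) 1)
    (hv : ∀ x, HasUniformValuePure q g x (v x)) (x : X) : v x ≤ 1 := by
  refine le_of_forall_pos_le_add fun ε hε => ?_
  obtain ⟨a, ha⟩ := (hv x).1 ε hε
  have h1 : liminf (fun n => payoff q g x a n) atTop ≤ 1 := by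
    refine liminf_le_of_le (isBoundedUnder_ge_payoff hg x a) fun b hb => ?_
    obtain ⟨n, hn⟩ := hb.exists
    exact le_trans hn (payoff_le_one hg x a n)
  linarith

lemma play_eq_foldl (q : X → I → X) (x : X) (a : ℕ → I) :
    ∀ n, play q x a n = ((List.range n).map a).foldl q x
  | 0 => rfl
  | n + 1 => by
      rw [List.range_succ, List.map_append, List.foldl_append, play_succ,
        play_eq_foldl q x a n]
      rfl

/-- Lemma C: the value cannot increase along reachable states. -/
lemma v_le_of_reach (hg : ∀ x i, g x i ∈ Set.Icc (0 : ℝ) 1)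
    (hv : ∀ x, HasUniformValuePure q g x (v x)) {x y : X}
    (h : ∃ w : List I, List.foldl q x w = y) : v y ≤ v x := by
  obtain ⟨w, rfl⟩ := h
  refine le_of_forall_pos_le_add fun ε hε => ?_
  obtain ⟨b, hb⟩ := (hv (List.foldl q x w)).1 ε hε
  classical
  set a : ℕ → I := fun t => if h : t < w.length then w[t] else b (t - w.length) with ha
  have hmap : (List.range w.length).map a = w := by
    refine List.ext_getElem (by simp) fun t h1 h2 => ?_
    simp only [List.getElem_map, List.getElem_range]
    have ht : t < w.length := h2
    simp [ha, ht]
  have hplay : play q x a w.length = List.foldl q x w := by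
    rw [play_eq_foldl, hmap]
  have hshift : (fun t => a (w.length + t)) = b := by
    funext t
    have h1 : ¬ (w.length + t < w.length) := by omega
    simp only [ha, dif_neg h1]
    congr 1
    omega
  have key : liminf (fun n => payoff q g x a n) atTop
      = liminf (fun n => payoff q g (List.foldl q x w) b n) atTop := by
    rw [← liminf_shift_eq (q := q) hg x a w.length, hplay, hshift]
  have h2 : liminf (fun n => payoff q g x a n) atTop ≤ v x := liminf_payoff_le hg hv x a
  rw [key] at h2
  linarith

/-- Lemma A: along a δ-optimal play, the value stays at least `liminf`-level. -/
lemma v_play_ge (hg : ∀ x i, g x i ∈ Set.Icc (0 : ℝ) 1)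
    (hv : ∀ x, HasUniformValuePure q g x (v x)) {x : X} {b : ℕ → I} {c : ℝ}
    (hb : c ≤ liminf (fun n => payoff q g x b n) atTop) (t : ℕ) :
    c ≤ v (play q x b t) := by
  have h1 : liminf (fun n => payoff q g (play q x b t) (fun s => b (t + s)) n) atTop
      = liminf (fun n => payoff q g x b n) atTop := liminf_shift_eq hg x b t
  have h2 := liminf_payoff_le hg hv (play q x b t) (fun s => b (t + s))
  rw [h1] at h2
  linarith

end value

section comm

variable {q : X → I → X} {g : X → I → ℝ} {v : X → ℝ}

lemma foldl_eq_of_coe_eq (hcomm : ∀ x i i', q (q x i) i' = q (q x i') i)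
    {w w' : List I} (h : (w : Multiset I) = (w' : Multiset I)) (x : X) :
    List.foldl q x w = List.foldl q x w' :=
  (Multiset.coe_eq_coe.mp h).foldl_eq' (fun i _ i' _ z => (hcomm z i i')) x

lemma reach_of_le (hcomm : ∀ x i i', q (q x i) i' = q (q x i') i)
    {w w' : List I} (h : (w : Multiset I) ≤ (w' : Multiset I)) (x : X) :
    ∃ u : List I, List.foldl q (List.foldl q x w) u = List.foldl q x w' := by
  classical
  set u : List I := ((w' : Multiset I) - (w : Multiset I)).toList with hu
  refine ⟨u, ?_⟩
  rw [← List.foldl_append]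
  apply foldl_eq_of_coe_eq hcomm
  have h1 : ((w ++ u : List I) : Multiset I) = (w : Multiset I) + (u : Multiset I) :=
    (Multiset.coe_add _ _).symm
  rw [h1, hu, Multiset.coe_toList, add_tsub_cancel_of_le h]

/-- The key lemma: from any state there are arbitrarily long plays with near-optimal average
payoff whose endpoint has exactly the same value. -/
lemma claimQ (hg : ∀ x i, g x i ∈ Set.Icc (0 : ℝ) 1)
    (hcomm : ∀ x i i', q (q x i) i' = q (q x i') i)
    (hv : ∀ x, HasUniformValuePure q g x (v x)) (x : X) (k L : ℕ) :
    ∃ (b : ℕ → I) (s : ℕ), L ≤ s ∧ v (play q x b s) = v x ∧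
      (v x - 1 / (k + 1)) * s ≤ psum q g x b s := by
  classical
  -- 1/(m+1)-optimal strategies
  have hbm : ∀ m : ℕ, ∃ b : ℕ → I,
      v x - 1 / ((m : ℝ) + 1) ≤ liminf (fun n => payoff q g x b n) atTop :=
    fun m => (hv x).1 (1 / ((m : ℝ) + 1)) (by positivity)
  choose b hb using hbm
  -- eventual payoff lower bounds
  have hev : ∀ m : ℕ, ∃ N, ∀ n ≥ N, v x - 2 / ((m : ℝ) + 1) < payoff q g x (b m) n := by
    intro m
    have hlt : v x - 2 / ((m : ℝ) + 1) < liminf (fun n => payoff q g x (b m) n) atTop := by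
      have h1 : (1 : ℝ) / ((m : ℝ) + 1) < 2 / ((m : ℝ) + 1) :=
        (div_lt_div_iff_of_pos_right (by positivity)).mpr one_lt_two
      linarith [hb m]
    exact eventually_atTop.mp (eventually_lt_of_lt_liminf hlt (isBoundedUnder_ge_payoff hg x (b m)))
  choose N hN using hev
  set s : ℕ → ℕ := fun m => max (max (N m) L) m with hs
  set w : ℕ → List I := fun m => (List.range (s m)).map (b m) with hw
  have hplayw : ∀ m, play q x (b m) (s m) = List.foldl q x (w m) := fun m => play_eq_foldl q x (b m) (s m)
  set C : ℕ → (I → ℕ) := fun m i => Multiset.count i ((w m : List I) : Multiset I) with hC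
  have hpwo : (Set.univ : Set (I → ℕ)).IsPWO :=
    Set.isPWO_univ_iff.mpr inferInstance
  obtain ⟨φ, hφ⟩ := hpwo.exists_monotone_subseq (f := C) (fun _ => Set.mem_univ _)
  -- mutual reachability along the chain forces exact value equality
  have hreach : ∀ j j' : ℕ, j ≤ j' → ∃ u : List I,
      List.foldl q (play q x (b (φ j)) (s (φ j))) u = play q x (b (φ j')) (s (φ j')) := by
    intro j j' hj
    rw [hplayw, hplayw]
    apply reach_of_le hcomm
    rw [Multiset.le_iff_count]
    exact fun i => hφ hj i
  have hvchain : ∀ j, v (play q x (b (φ j)) (s (φ j))) = v x := by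
    intro j
    have hle : v (play q x (b (φ j)) (s (φ j))) ≤ v x := by
      apply v_le_of_reach hg hv
      exact ⟨w (φ j), (hplayw (φ j)).symm⟩
    refine le_antisymm hle ?_
    refine le_of_forall_pos_le_add fun η hη => ?_
    obtain ⟨M, hM⟩ := exists_nat_gt (1 / η)
    set j' : ℕ := max j M with hj'
    have hφj' : (M : ℝ) ≤ (φ j' : ℝ) := by
      have h1 : M ≤ j' := le_max_right _ _
      have h2 : j' ≤ φ j' := (OrderEmbedding.strictMono φ).le_apply
      exact_mod_cast h1.trans h2
    have hsmall : 1 / ((φ j' : ℝ) + 1) < η := by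
      rw [div_lt_iff₀ (by positivity)]
      have h1 : (0 : ℝ) < η := hη
      have h2 : 1 / η < (φ j' : ℝ) + 1 := by linarith [hM]
      calc (1 : ℝ) = η * (1 / η) := by field_simp
        _ < η * ((φ j' : ℝ) + 1) := by
            apply mul_lt_mul_of_pos_left h2 h1
    have h3 : v x - 1 / ((φ j' : ℝ) + 1) ≤ v (play q x (b (φ j')) (s (φ j'))) :=
      v_play_ge hg hv (hb (φ j')) (s (φ j'))
    obtain ⟨u, hu⟩ := hreach j j' (le_max_left _ _)
    have h4 : v (play q x (b (φ j')) (s (φ j'))) ≤ v (play q x (b (φ j)) (s (φ j))) := by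
      apply v_le_of_reach hg hv
      exact ⟨u, hu⟩
    linarith
  -- choose a deep enough element of the chain
  set j₀ : ℕ := 2 * k + 1 with hj₀
  set m₀ : ℕ := φ j₀ with hm₀
  have hm₀big : 2 * k + 1 ≤ m₀ := le_trans (le_refl _) ((OrderEmbedding.strictMono φ).le_apply)
  have heps : 2 / ((m₀ : ℝ) + 1) ≤ 1 / ((k : ℝ) + 1) := by
    rw [div_le_div_iff₀ (by positivity) (by positivity)]
    have : (2 * k + 1 : ℝ) ≤ (m₀ : ℝ) := by exact_mod_cast hm₀big
    linarith
  refine ⟨b m₀, s m₀, le_trans (le_max_right (N m₀) L) (le_max_left _ _), hvchain j₀, ?_⟩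
  have hsN : N m₀ ≤ s m₀ := le_trans (le_max_left _ _) (le_max_left _ _)
  have hpay : v x - 2 / ((m₀ : ℝ) + 1) < payoff q g x (b m₀) (s m₀) := hN m₀ (s m₀) hsN
  have hspos : 0 < s m₀ := by
    have : m₀ ≤ s m₀ := le_max_right _ _
    omega
  have hspos' : (0 : ℝ) < (s m₀ : ℝ) := by exact_mod_cast hspos
  have hkey : v x - 1 / ((k : ℝ) + 1) ≤ payoff q g x (b m₀) (s m₀) := by linarith
  calc (v x - 1 / ((k : ℝ) + 1)) * (s m₀ : ℝ)
      ≤ payoff q g x (b m₀) (s m₀) * (s m₀ : ℝ) :=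
        mul_le_mul_of_nonneg_right hkey hspos'.le
    _ = psum q g x (b m₀) (s m₀) := by
        rw [payoff_eq_psum]
        field_simp

end comm


end PZO

/-- In a deterministic commutative MDP having a uniform value in pure strategies at every
initial state, every initial state admits a partially `0`-optimal pure strategy: a pure strategy
whose expected average payoffs have limsup equal to the uniform value. -/
theorem exists_partially_zero_optimal_pure
    {X I : Type*} [Fintype I] [Nonempty I]
    (q : X → I → X) (g : X → I → ℝ)
    (hg : ∀ x i, g x i ∈ Set.Icc (0 : ℝ) 1)
    (hcomm : ∀ x i i', q (q x i) i' = q (q x i') i)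
    (v : X → ℝ) (hv : ∀ x, HasUniformValuePure q g x (v x))
    (x₁ : X) :
    ∃ a : ℕ → I, limsup (fun n => payoff q g x₁ a n) atTop = v x₁ := by
  classical
  have claim := fun (x : X) (k L : ℕ) => PZO.claimQ (q := q) hg hcomm hv x k L
  choose bF sF hFL hFv hFS using claim
  set i₀ : I := Classical.arbitrary I with hi₀
  set W : List I → ℕ → List I := fun Q k =>
    (List.range (sF (List.foldl q x₁ Q) k ((k + 1) * (Q.length + 1)))).map
      (bF (List.foldl q x₁ Q) k ((k + 1) * (Q.length + 1))) with hW
  set P : ℕ → List I := fun n => Nat.rec [] (fun k Pk => Pk ++ W Pk k) n with hP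
  have hPzero : P 0 = [] := rfl
  have hPsucc : ∀ k, P (k + 1) = P k ++ W (P k) k := fun k => rfl
  set xk : ℕ → X := fun k => List.foldl q x₁ (P k) with hxk
  set Lk : ℕ → ℕ := fun k => (k + 1) * ((P k).length + 1) with hLk
  set bk : ℕ → ℕ → I := fun k => bF (xk k) k (Lk k) with hbk
  set sk : ℕ → ℕ := fun k => sF (xk k) k (Lk k) with hsk
  have hWlen : ∀ k, (W (P k) k).length = sk k := by
    intro k; simp [hW, hsk, hxk, hLk]
  have hWge : ∀ k, Lk k ≤ sk k := fun k => hFL _ _ _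
  have hlen_succ_eq : ∀ k, (P (k + 1)).length = (P k).length + sk k := by
    intro k; rw [hPsucc, List.length_append, hWlen]
  have hsk_pos : ∀ k, 1 ≤ sk k := by
    intro k
    have h1 := hWge k
    have h2 : 1 ≤ Lk k := by
      rw [hLk]
      exact Nat.one_le_iff_ne_zero.mpr (by positivity)
    omega
  have hlen : ∀ k, k ≤ (P k).length := by
    intro k
    induction k with
    | zero => omega
    | succ k ih =>
        have h1 := hlen_succ_eq k
        have h2 := hsk_pos k
        omega
  have hprefix : ∀ j k, j ≤ k → (P j) <+: (P k) := by
    intro j k hjk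
    induction k with
    | zero =>
        have : j = 0 := by omega
        subst this; exact List.prefix_refl _
    | succ k ih =>
        rcases Nat.lt_or_ge j (k + 1) with h | h
        · have h1 : j ≤ k := by omega
          exact (ih h1).trans (by rw [hPsucc]; exact List.prefix_append _ _)
        · have : j = k + 1 := by omega
          subst this; exact List.prefix_refl _
  set a : ℕ → I := fun t => (P (t + 1)).getD t i₀ with ha
  have hgetP : ∀ j k t, j ≤ k → t < (P j).length → (P k).getD t i₀ = (P j).getD t i₀ := by
    intro j k t hjk ht
    obtain ⟨r, hr⟩ := hprefix j k hjk
    rw [← hr, List.getD_append _ _ _ _ ht]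
  have haP : ∀ k t, t < (P k).length → a t = (P k).getD t i₀ := by
    intro k t ht
    rw [ha]
    rcases Nat.le_total (t + 1) k with h | h
    · exact (hgetP (t + 1) k t h (by have := hlen (t + 1); omega)).symm
    · exact hgetP k (t + 1) t h ht
  have hmapP : ∀ k, (List.range (P k).length).map a = P k := by
    intro k
    refine List.ext_getElem (by simp) fun t h1 h2 => ?_
    simp only [List.getElem_map, List.getElem_range]
    rw [haP k t h2, List.getD_eq_getElem _ _ h2]
  have hplayP : ∀ k, play q x₁ a (P k).length = xk k := by
    intro k; rw [PZO.play_eq_foldl, hmapP, hxk]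
  have hfoldW : ∀ k, xk (k + 1) = play q (xk k) (bk k) (sk k) := by
    intro k
    rw [hxk]
    show List.foldl q x₁ (P (k + 1)) = _
    rw [hPsucc, List.foldl_append, PZO.play_eq_foldl]
  have hvP : ∀ k, v (xk k) = v x₁ := by
    intro k
    induction k with
    | zero => rw [hxk]; rfl
    | succ k ih => rw [hfoldW k, hbk, hsk, hFv, ih]
  -- the block of `a` between the checkpoints agrees with `bk k`
  have hblock : ∀ k t, t < sk k → a ((P k).length + t) = bk k t := by
    intro k t ht
    have h1 : (P k).length + t < (P (k + 1)).length := by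
      rw [hlen_succ_eq]; omega
    rw [haP (k + 1) _ h1, hPsucc k,
      List.getD_append_right _ _ _ _ (Nat.le_add_right _ _)]
    have h5 : (P k).length + t - (P k).length = t := by omega
    rw [h5]
    have h6 : t < (W (P k) k).length := by rw [hWlen]; exact ht
    rw [List.getD_eq_getElem _ _ h6]
    simp only [hW, List.getElem_map, List.getElem_range]
    rfl
  -- checkpoint payoff estimate
  have hcheck : ∀ k : ℕ, v x₁ - 2 / ((k : ℝ) + 1) ≤ payoff q g x₁ a ((P (k + 1)).length) := by
    intro k
    set n : ℕ := (P k).length with hn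
    set m : ℕ := (P (k + 1)).length with hm
    have hmeq : m = n + sk k := hlen_succ_eq k
    have hsum : PZO.psum q g x₁ a m = PZO.psum q g x₁ a n
        + PZO.psum q g (xk k) (fun t => a (n + t)) (sk k) := by
      rw [hmeq, PZO.psum_add q g x₁ a n (sk k), hplayP k]
    have hsum2 : PZO.psum q g (xk k) (fun t => a (n + t)) (sk k)
        = PZO.psum q g (xk k) (bk k) (sk k) := PZO.psum_congr fun t ht => hblock k t ht
    have hFS' : (v x₁ - 1 / ((k : ℝ) + 1)) * (sk k : ℝ) ≤ PZO.psum q g (xk k) (bk k) (sk k) := by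
      have := hFS (xk k) k (Lk k)
      rw [hvP k] at this
      exact this
    have h0 : 0 ≤ PZO.psum q g x₁ a n := PZO.psum_nonneg hg _ _ _
    have hT1 : v x₁ - 1 / ((k : ℝ) + 1) ≤ 1 := by
      have := PZO.v_le_one hg hv x₁
      have h2 : (0 : ℝ) < 1 / ((k : ℝ) + 1) := by positivity
      linarith
    have hkn : (k : ℝ) * n ≤ (sk k : ℝ) := by
      have h1 : k * n ≤ Lk k := by rw [hLk, hn]; nlinarith [Nat.zero_le ((P k).length)]
      have h2 := hWge k
      exact_mod_cast h1.trans h2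
    have hmpos : 0 < m := by have := hsk_pos k; omega
    have hmpos' : (0 : ℝ) < (m : ℝ) := by exact_mod_cast hmpos
    have hcast : (m : ℝ) = (n : ℝ) + (sk k : ℝ) := by rw [hmeq]; push_cast; ring
    have hnn : (0 : ℝ) ≤ (n : ℝ) := by positivity
    -- psum total ≥ T*m - n  where T = v x₁ - 1/(k+1)
    have hkey : (v x₁ - 1 / ((k : ℝ) + 1)) * m - n ≤ PZO.psum q g x₁ a m := by
      rw [hsum, hsum2, hcast]
      nlinarith [hFS']
    -- n/m ≤ 1/(k+1)
    have hfrac : (n : ℝ) * ((k : ℝ) + 1) ≤ (m : ℝ) := by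
      rw [hcast]
      nlinarith [hkn]
    have h9 : (n : ℝ) ≤ (1 / ((k : ℝ) + 1)) * m := by
      rw [one_div, inv_mul_eq_div, le_div_iff₀ (by positivity)]
      linarith [hfrac]
    rw [PZO.payoff_eq_psum, one_div, inv_mul_eq_div, le_div_iff₀ hmpos']
    have h10 : (v x₁ - 2 / ((k : ℝ) + 1)) * (m : ℝ)
        = ((v x₁ - 1 / ((k : ℝ) + 1)) * (m : ℝ) - (1 / ((k : ℝ) + 1)) * (m : ℝ)) := by
      ring
    rw [h10]
    linarith [hkey, h9]
  -- conclusion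
  refine ⟨a, le_antisymm (PZO.limsup_payoff_le hg hv x₁ a) ?_⟩
  refine le_of_forall_pos_le_add fun δ hδ => ?_
  obtain ⟨K, hK⟩ := exists_nat_gt (2 / δ)
  have hfreq : ∃ᶠ n in atTop, v x₁ - δ ≤ payoff q g x₁ a n := by
    rw [Filter.frequently_atTop]
    intro M
    set k : ℕ := max M K with hk
    refine ⟨(P (k + 1)).length, ?_, ?_⟩
    · have h1 := hlen (k + 1)
      have h2 : M ≤ k := le_max_left _ _
      omega
    · have h1 := hcheck k
      have h2 : 2 / ((k : ℝ) + 1) ≤ δ := by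
        have hKk : (K : ℝ) ≤ (k : ℝ) := by exact_mod_cast le_max_right M K
        have h3 : 2 / δ < (k : ℝ) + 1 := by linarith [hK]
        rw [div_le_iff₀ (by positivity)]
        calc (2 : ℝ) = δ * (2 / δ) := by field_simp
          _ ≤ δ * ((k : ℝ) + 1) := by nlinarith [h3, hδ]
      linarith
  have h2 := le_limsup_of_frequently_le hfreq (PZO.isBoundedUnder_le_payoff hg x₁ a)
  linarith
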